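/- arXiv:2502.20151 — 3 statements merged into one kernel-verified Lean document; each statement's English description precedes it below -/
import Mathlib

section
/- The edge set of every 2k-regular finite multigraph (without semi-edges) can be partitioned into k spanning subgraphs each of which is 2-regular (i.e., k 2-factors). -/
open Finset

def mdeg {V E : Type} [DecidableEq V] (ends : E → Sym2 V) (v : V) (e : E) : ℕ :=
  if ends e = Sym2.mk v v then 2 else if v ∈ ends e then 1 else 0

lemma mdeg_eq {V E : Type} [DecidableEq V] (ends : E → Sym2 V) (v : V) (e : E)
    (a b : V) (h : ends e = Sym2.mk a b) :
    mdeg ends v e = (if a = v then 1 else 0) + (if b = v then 1 else 0) := by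
  unfold mdeg
  rw [h]
  simp only [Sym2.eq_iff, Sym2.mem_iff]
  rcases eq_or_ne v a with ha | ha <;> rcases eq_or_ne v b with hb | hb
  · subst ha; subst hb; simp
  · subst ha; simp [hb, Ne.symm hb]
  · subst hb; simp [ha, Ne.symm ha]
  · simp [ha, hb, Ne.symm ha, Ne.symm hb]

lemma mdeg_pos_mem {V E : Type} [DecidableEq V] (ends : E → Sym2 V) (v : V) (e : E)
    (h : mdeg ends v e ≠ 0) : v ∈ ends e := by
  unfold mdeg at h
  split at h
  · next hl => rw [hl]; simp [Sym2.mem_iff]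
  · split at h
    · assumption
    · exact absurd rfl h

lemma exists_balanced_orientation {V E : Type} [DecidableEq V] [DecidableEq E] [Fintype E]
    (ends : E → Sym2 V) (R : Finset E) (heven : ∀ v, Even (∑ e ∈ R, mdeg ends v e)) :
    ∃ T H : E → V, (∀ e ∈ R, ends e = Sym2.mk (T e) (H e)) ∧
      ∀ v, (R.filter fun e => T e = v).card = (R.filter fun e => H e = v).card := by
  classical
  induction R using Finset.strongInduction with
  | _ R ih =>
  rcases R.eq_empty_or_nonempty with rfl | ⟨e0, he0⟩
  · exact ⟨fun e => (Quot.out (ends e)).1, fun e => (Quot.out (ends e)).2,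
      by simp, by simp⟩
  -- the trail predicate
  set P : ℕ → Prop := fun n => ∃ (f : Fin n → E) (g : Fin (n+1) → V),
    Function.Injective f ∧ (∀ i, f i ∈ R) ∧
      ∀ i : Fin n, ends (f i) = Sym2.mk (g i.castSucc) (g i.succ) with hP
  have hbound : ∀ n, P n → n ≤ Fintype.card E := by
    intro n ⟨f, g, hinj, _, _⟩
    simpa using Fintype.card_le_of_injective f hinj
  have hP1 : P 1 := by
    refine ⟨fun _ => e0, fun j => if j = 1 then (Quot.out (ends e0)).2
      else (Quot.out (ends e0)).1, fun i j _ => Subsingleton.elim i j,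
      fun _ => he0, fun i => ?_⟩
    have h0 : i = 0 := Subsingleton.elim _ _
    subst h0
    have h1 : ((0 : Fin 1).castSucc : Fin 2) ≠ 1 := by decide
    have h2 : ((0 : Fin 1).succ : Fin 2) = 1 := by decide
    show ends e0 = Sym2.mk
      (if (0 : Fin 1).castSucc = 1 then (Quot.out (ends e0)).2 else (Quot.out (ends e0)).1)
       (if (0 : Fin 1).succ = 1 then (Quot.out (ends e0)).2 else (Quot.out (ends e0)).1)
    rw [if_neg h1, if_pos h2]
    exact (Quot.out_eq (ends e0)).symm
  have hcardpos : 1 ≤ Fintype.card E := Fintype.card_pos_iff.mpr ⟨e0⟩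
  set N := Nat.findGreatest P (Fintype.card E) with hNdef
  have hNP : P N := Nat.findGreatest_spec hcardpos hP1
  have hN1 : 1 ≤ N := Nat.le_findGreatest hcardpos hP1
  have hmax : ¬ P (N + 1) := by
    intro h
    exact Nat.findGreatest_is_greatest (Nat.lt_succ_self N) (hbound _ h) h
  obtain ⟨f, g, hinj, hmem, hedge⟩ := hNP
  set v := g (Fin.last N) with hv
  set Simg := Finset.image f univ with hSimg
  have hsub : Simg ⊆ R := by
    intro e he
    obtain ⟨i, _, rfl⟩ := Finset.mem_image.mp he
    exact hmem i
  have husedsum : ∀ v' : V, ∑ i : Fin N, mdeg ends v' (f i) =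
      (∑ i : Fin N, if g i.castSucc = v' then 1 else 0) +
      (∑ i : Fin N, if g i.succ = v' then 1 else 0) := by
    intro v'
    rw [← Finset.sum_add_distrib]
    exact Finset.sum_congr rfl fun i _ => mdeg_eq ends v' (f i) _ _ (hedge i)
  have hstar : ∀ v' : V,
      (∑ i : Fin N, if g i.castSucc = v' then 1 else 0) +
        (if g (Fin.last N) = v' then 1 else 0) =
      (if g 0 = v' then 1 else 0) +
        (∑ i : Fin N, if g i.succ = v' then 1 else 0) := by
    intro v'
    rw [← Fin.sum_univ_castSucc (fun i => if g i = v' then (1:ℕ) else 0),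
        Fin.sum_univ_succ (fun i => if g i = v' then (1:ℕ) else 0)]
  have hSimgsum : ∀ v' : V, ∑ e ∈ Simg, mdeg ends v' e = ∑ i : Fin N, mdeg ends v' (f i) := by
    intro v'
    rw [hSimg, Finset.sum_image (fun x _ y _ h => hinj h)]
  have hclosed : g 0 = g (Fin.last N) := by
    by_contra hne
    -- the sum of used degrees at v is odd
    have hodd : ¬ Even (∑ i : Fin N, mdeg ends v (f i)) := by
      rw [husedsum]
      have h := hstar v
      rw [if_pos rfl, if_neg hne] at h
      intro hev
      obtain ⟨m, hm⟩ := hev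
      omega
    -- find an unused edge at v
    have hex : ∃ e1, e1 ∈ R ∧ e1 ∉ Simg ∧ v ∈ ends e1 := by
      by_contra hno
      push_neg at hno
      have hz : ∀ e ∈ R \ Simg, mdeg ends v e = 0 := by
        intro e he
        rw [Finset.mem_sdiff] at he
        by_contra hnz
        exact (hno e he.1 he.2) (mdeg_pos_mem ends v e hnz)
      have : ∑ e ∈ R, mdeg ends v e = ∑ i : Fin N, mdeg ends v (f i) := by
        rw [← Finset.sum_sdiff hsub, Finset.sum_eq_zero hz, zero_add, hSimgsum]
      exact hodd (this ▸ heven v)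
    obtain ⟨e1, he1R, he1S, he1v⟩ := hex
    obtain ⟨w, hw⟩ := Sym2.mem_iff_exists.mp he1v
    -- extend the trail
    apply hmax
    refine ⟨Fin.snoc f e1, Fin.snoc g w, ?_, ?_, ?_⟩
    · intro i j hij
      rcases Fin.eq_castSucc_or_eq_last i with ⟨i', rfl⟩ | rfl <;>
        rcases Fin.eq_castSucc_or_eq_last j with ⟨j', rfl⟩ | rfl
      · rw [Fin.snoc_castSucc, Fin.snoc_castSucc] at hij
        exact congrArg _ (hinj hij)
      · rw [Fin.snoc_castSucc, Fin.snoc_last] at hij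
        exact absurd (Finset.mem_image.mpr ⟨i', Finset.mem_univ _, hij⟩) he1S
      · rw [Fin.snoc_castSucc, Fin.snoc_last] at hij
        exact absurd (Finset.mem_image.mpr ⟨j', Finset.mem_univ _, hij.symm⟩) he1S
      · rfl
    · intro i
      rcases Fin.eq_castSucc_or_eq_last i with ⟨i', rfl⟩ | rfl
      · rw [Fin.snoc_castSucc]; exact hmem i'
      · rw [Fin.snoc_last]; exact he1R
    · intro i
      rcases Fin.eq_castSucc_or_eq_last i with ⟨i', rfl⟩ | rfl
      · rw [Fin.snoc_castSucc, Fin.snoc_castSucc, Fin.succ_castSucc, Fin.snoc_castSucc]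
        exact hedge i'
      · rw [Fin.snoc_last, Fin.snoc_castSucc, Fin.succ_last, Fin.snoc_last,
          show g (Fin.last N) = v from rfl]
        exact hw
  -- now peel off the closed trail
  have hkey : ∀ v' : V, (∑ i : Fin N, if g i.castSucc = v' then 1 else 0) =
      (∑ i : Fin N, if g i.succ = v' then 1 else 0) := by
    intro v'
    have h := hstar v'
    rw [← hclosed] at h
    omega
  have hSne : Simg.Nonempty := ⟨f ⟨0, by omega⟩, Finset.mem_image.mpr ⟨_, Finset.mem_univ _, rfl⟩⟩
  have hss : R \ Simg ⊂ R := Finset.sdiff_ssubset hsub hSne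
  have hsd : ∀ v', ∑ e ∈ R \ Simg, mdeg ends v' e + ∑ e ∈ Simg, mdeg ends v' e
      = ∑ e ∈ R, mdeg ends v' e := fun v' => Finset.sum_sdiff hsub
  have heven' : ∀ v', Even (∑ e ∈ R \ Simg, mdeg ends v' e) := by
    intro v'
    have hS : Even (∑ e ∈ Simg, mdeg ends v' e) := by
      rw [hSimgsum, husedsum, hkey]
      exact ⟨_, rfl⟩
    have := heven v'
    rw [← hsd v'] at this
    exact (Nat.even_add.mp this).mpr hS
  obtain ⟨T', H', h1', h2'⟩ := ih (R \ Simg) hss heven'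
  set T : E → V := fun e => if h : ∃ i, f i = e then g (Classical.choose h).castSucc else T' e
    with hT
  set H : E → V := fun e => if h : ∃ i, f i = e then g (Classical.choose h).succ else H' e
    with hH
  have hmemS : ∀ e, e ∈ Simg ↔ ∃ i, f i = e := by
    intro e
    simp [hSimg, Finset.mem_image]
  have hTf : ∀ i, T (f i) = g i.castSucc := by
    intro i
    rw [hT]
    have hex : ∃ j, f j = f i := ⟨i, rfl⟩
    simp only [dif_pos hex]
    rw [hinj (Classical.choose_spec hex)]
  have hHf : ∀ i, H (f i) = g i.succ := by
    intro i
    rw [hH]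
    have hex : ∃ j, f j = f i := ⟨i, rfl⟩
    simp only [dif_pos hex]
    rw [hinj (Classical.choose_spec hex)]
  have hTout : ∀ e ∉ Simg, T e = T' e := by
    intro e he
    rw [hT]
    exact dif_neg (fun h => he ((hmemS e).mpr h))
  have hHout : ∀ e ∉ Simg, H e = H' e := by
    intro e he
    rw [hH]
    exact dif_neg (fun h => he ((hmemS e).mpr h))
  refine ⟨T, H, ?_, ?_⟩
  · intro e heR
    by_cases hS : e ∈ Simg
    · obtain ⟨i, hi⟩ := (hmemS e).mp hS
      subst hi
      rw [hTf, hHf]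
      exact hedge i
    · rw [hTout e hS, hHout e hS]
      exact h1' e (Finset.mem_sdiff.mpr ⟨heR, hS⟩)
  · intro v'
    have hsplit : ∀ (F : E → V), (R.filter fun e => F e = v') =
        ((R \ Simg).filter fun e => F e = v') ∪ (Simg.filter fun e => F e = v') := by
      intro F
      rw [← Finset.filter_union, Finset.sdiff_union_of_subset hsub]
    have hdisj : ∀ (F G : E → V), Disjoint ((R \ Simg).filter fun e => F e = v')
        (Simg.filter fun e => G e = v') :=
      fun F G => Finset.disjoint_filter_filter Finset.sdiff_disjoint
    rw [hsplit T, hsplit H, Finset.card_union_of_disjoint (hdisj T T),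
        Finset.card_union_of_disjoint (hdisj H H)]
    have hc1 : ((R \ Simg).filter fun e => T e = v') = ((R \ Simg).filter fun e => T' e = v') :=
      Finset.filter_congr fun e he => by
        rw [hTout e (Finset.mem_sdiff.mp he).2]
    have hc2 : ((R \ Simg).filter fun e => H e = v') = ((R \ Simg).filter fun e => H' e = v') :=
      Finset.filter_congr fun e he => by
        rw [hHout e (Finset.mem_sdiff.mp he).2]
    have hc3 : (Simg.filter fun e => T e = v') =
        Finset.image f (univ.filter fun i => g i.castSucc = v') := by
      ext e
      simp only [Finset.mem_filter, Finset.mem_image, Finset.mem_univ, true_and, hSimg]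
      constructor
      · rintro ⟨⟨i, -, rfl⟩, hTv⟩
        exact ⟨i, by rwa [hTf] at hTv, rfl⟩
      · rintro ⟨i, hgi, rfl⟩
        first
        | exact ⟨⟨i, Finset.mem_univ _, rfl⟩, by rwa [hTf]⟩
        | exact ⟨⟨i, rfl⟩, by rwa [hTf]⟩
    have hc4 : (Simg.filter fun e => H e = v') =
        Finset.image f (univ.filter fun i => g i.succ = v') := by
      ext e
      simp only [Finset.mem_filter, Finset.mem_image, Finset.mem_univ, true_and, hSimg]
      constructor
      · rintro ⟨⟨i, -, rfl⟩, hHv⟩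
        exact ⟨i, by rwa [hHf] at hHv, rfl⟩
      · rintro ⟨i, hgi, rfl⟩
        first
        | exact ⟨⟨i, Finset.mem_univ _, rfl⟩, by rwa [hHf]⟩
        | exact ⟨⟨i, rfl⟩, by rwa [hHf]⟩
    rw [hc1, hc2, hc3, hc4, Finset.card_image_of_injective _ hinj,
        Finset.card_image_of_injective _ hinj, h2' v',
        Finset.card_filter, Finset.card_filter, Finset.card_filter, hkey v']

lemma bipartite_decomp {V E : Type} [DecidableEq V] [DecidableEq E] [Fintype V] [Fintype E]
    (T H : E → V) :
    ∀ (k : ℕ) (R : Finset E),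
      (∀ v, (R.filter fun e => T e = v).card = k) →
      (∀ v, (R.filter fun e => H e = v).card = k) →
      ∃ c : E → ℕ, (∀ e ∈ R, c e < k) ∧
        ∀ i < k, ∀ v,
          (R.filter fun e => c e = i ∧ T e = v).card = 1 ∧
          (R.filter fun e => c e = i ∧ H e = v).card = 1 := by
  intro k
  induction k with
  | zero =>
    intro R hT hH
    refine ⟨fun _ => 0, ?_, fun i hi => absurd hi (Nat.not_lt_zero i)⟩
    intro e he
    have h0 := hT (T e)
    rw [Finset.card_eq_zero] at h0
    have hmem : e ∈ R.filter fun e' => T e' = T e := Finset.mem_filter.mpr ⟨he, rfl⟩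
    rw [h0] at hmem
    exact absurd hmem (Finset.notMem_empty e)
  | succ k ihk =>
    intro R hT hH
    set t : V → Finset V := fun v => (R.filter fun e => T e = v).image H with ht
    have hall : ∀ s : Finset V, s.card ≤ (s.biUnion t).card := by
      intro s
      have hA : (R.filter fun e => T e ∈ s) = s.biUnion fun v => R.filter fun e => T e = v := by
        ext e
        simp only [Finset.mem_filter, Finset.mem_biUnion]
        constructor
        · rintro ⟨he, hs⟩; exact ⟨T e, hs, he, rfl⟩
        · rintro ⟨v, hv, he, rfl⟩; exact ⟨he, hv⟩
      have hdisj : ∀ x ∈ s, ∀ y ∈ s, x ≠ y →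
          Disjoint (R.filter fun e => T e = x) (R.filter fun e => T e = y) := by
        intro x _ y _ hxy
        rw [Finset.disjoint_left]
        intro e he1 he2
        rw [Finset.mem_filter] at he1 he2
        exact hxy (he1.2 ▸ he2.2 ▸ rfl)
      have hcardA : (R.filter fun e => T e ∈ s).card = s.card * (k+1) := by
        rw [hA, Finset.card_biUnion hdisj, Finset.sum_congr rfl fun v _ => hT v,
          Finset.sum_const, smul_eq_mul]
      have hsubA : (R.filter fun e => T e ∈ s) ⊆
          ((s.biUnion t).biUnion fun w => R.filter fun e => H e = w) := by
        intro e he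
        rw [Finset.mem_filter] at he
        refine Finset.mem_biUnion.mpr ⟨H e, ?_, Finset.mem_filter.mpr ⟨he.1, rfl⟩⟩
        exact Finset.mem_biUnion.mpr ⟨T e, he.2,
          Finset.mem_image.mpr ⟨e, Finset.mem_filter.mpr ⟨he.1, rfl⟩, rfl⟩⟩
      have hcardB : ((s.biUnion t).biUnion fun w => R.filter fun e => H e = w).card ≤
          (s.biUnion t).card * (k+1) := by
        refine le_trans Finset.card_biUnion_le ?_
        rw [Finset.sum_congr rfl fun w _ => hH w, Finset.sum_const, smul_eq_mul]
      have hfin : s.card * (k+1) ≤ (s.biUnion t).card * (k+1) := by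
        rw [← hcardA]
        exact le_trans (Finset.card_le_card hsubA) hcardB
      exact Nat.le_of_mul_le_mul_right hfin (Nat.succ_pos k)
    obtain ⟨fm, hfinj, hfmem⟩ := (Finset.all_card_le_biUnion_card_iff_exists_injective t).mp hall
    have hMex : ∀ v, ∃ e, e ∈ R ∧ T e = v ∧ H e = fm v := by
      intro v
      obtain ⟨e, he, hHe⟩ := Finset.mem_image.mp (hfmem v)
      rw [Finset.mem_filter] at he
      exact ⟨e, he.1, he.2, hHe⟩
    choose M hMR hMT hMH using hMex
    have hfbij : Function.Bijective fm := (Finite.injective_iff_bijective).mp hfinj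
    set S := Finset.image M univ with hS
    have hMS : ∀ v, M v ∈ S := fun v => Finset.mem_image.mpr ⟨v, Finset.mem_univ _, rfl⟩
    have hSsub : S ⊆ R := by
      intro e he
      obtain ⟨v, -, rfl⟩ := Finset.mem_image.mp he
      exact hMR v
    have hT' : ∀ v, ((R \ S).filter fun e => T e = v).card = k := by
      intro v
      have heq : (R \ S).filter (fun e => T e = v) = (R.filter fun e => T e = v).erase (M v) := by
        ext e
        simp only [Finset.mem_filter, Finset.mem_sdiff, Finset.mem_erase]
        constructor
        · rintro ⟨⟨heR, heS⟩, hTe⟩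
          exact ⟨fun h => heS (h ▸ hMS v), heR, hTe⟩
        · rintro ⟨hne, heR, hTe⟩
          refine ⟨⟨heR, fun heS => hne ?_⟩, hTe⟩
          obtain ⟨u, -, rfl⟩ := Finset.mem_image.mp heS
          rw [hMT u] at hTe
          rw [hTe]
      rw [heq, Finset.card_erase_of_mem (Finset.mem_filter.mpr ⟨hMR v, hMT v⟩), hT v]
      rfl
    have hH' : ∀ v, ((R \ S).filter fun e => H e = v).card = k := by
      intro v
      obtain ⟨u, hu⟩ := hfbij.2 v
      have heq : (R \ S).filter (fun e => H e = v) = (R.filter fun e => H e = v).erase (M u) := by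
        ext e
        simp only [Finset.mem_filter, Finset.mem_sdiff, Finset.mem_erase]
        constructor
        · rintro ⟨⟨heR, heS⟩, hHe⟩
          exact ⟨fun h => heS (h ▸ hMS u), heR, hHe⟩
        · rintro ⟨hne, heR, hHe⟩
          refine ⟨⟨heR, fun heS => hne ?_⟩, hHe⟩
          obtain ⟨w, -, rfl⟩ := Finset.mem_image.mp heS
          rw [hMH w, ← hu] at hHe
          rw [hfinj hHe]
      rw [heq, Finset.card_erase_of_mem
        (Finset.mem_filter.mpr ⟨hMR u, by rw [hMH u, hu]⟩), hH v]
      rfl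
    obtain ⟨c', hc'lt, hc'⟩ := ihk (R \ S) hT' hH'
    refine ⟨fun e => if e ∈ S then k else c' e, ?_, ?_⟩
    · intro e he
      by_cases hS' : e ∈ S
      · simp [hS']
      · have := hc'lt e (Finset.mem_sdiff.mpr ⟨he, hS'⟩)
        simp only [if_neg hS']
        omega
    · intro i hi v
      by_cases hik : i < k
      · -- i < k : reduce to c'
        have hTeq : (R.filter fun e => (if e ∈ S then k else c' e) = i ∧ T e = v) =
            ((R \ S).filter fun e => c' e = i ∧ T e = v) := by
          ext e
          simp only [Finset.mem_filter, Finset.mem_sdiff]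
          constructor
          · rintro ⟨heR, hce, hTe⟩
            by_cases hS' : e ∈ S
            · rw [if_pos hS'] at hce; omega
            · rw [if_neg hS'] at hce; exact ⟨⟨heR, hS'⟩, hce, hTe⟩
          · rintro ⟨⟨heR, hS'⟩, hce, hTe⟩
            exact ⟨heR, by rw [if_neg hS']; exact hce, hTe⟩
        have hHeq : (R.filter fun e => (if e ∈ S then k else c' e) = i ∧ H e = v) =
            ((R \ S).filter fun e => c' e = i ∧ H e = v) := by
          ext e
          simp only [Finset.mem_filter, Finset.mem_sdiff]
          constructor
          · rintro ⟨heR, hce, hHe⟩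
            by_cases hS' : e ∈ S
            · rw [if_pos hS'] at hce; omega
            · rw [if_neg hS'] at hce; exact ⟨⟨heR, hS'⟩, hce, hHe⟩
          · rintro ⟨⟨heR, hS'⟩, hce, hHe⟩
            exact ⟨heR, by rw [if_neg hS']; exact hce, hHe⟩
        rw [hTeq, hHeq]
        exact hc' i hik v
      · -- i = k : the matching
        have hik2 : i = k := by omega
        constructor
        · have : (R.filter fun e => (if e ∈ S then k else c' e) = i ∧ T e = v) = {M v} := by
            ext e
            simp only [Finset.mem_filter, Finset.mem_singleton]
            constructor
            · rintro ⟨heR, hce, hTe⟩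
              by_cases hS' : e ∈ S
              · obtain ⟨u, -, rfl⟩ := Finset.mem_image.mp hS'
                rw [hMT u] at hTe
                rw [hTe]
              · rw [if_neg hS'] at hce
                have := hc'lt e (Finset.mem_sdiff.mpr ⟨heR, hS'⟩)
                omega
            · rintro rfl
              exact ⟨hMR v, by rw [if_pos (hMS v)]; omega, hMT v⟩
          rw [this, Finset.card_singleton]
        · obtain ⟨u, hu⟩ := hfbij.2 v
          have : (R.filter fun e => (if e ∈ S then k else c' e) = i ∧ H e = v) = {M u} := by
            ext e
            simp only [Finset.mem_filter, Finset.mem_singleton]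
            constructor
            · rintro ⟨heR, hce, hHe⟩
              by_cases hS' : e ∈ S
              · obtain ⟨w, -, rfl⟩ := Finset.mem_image.mp hS'
                rw [hMH w, ← hu] at hHe
                rw [hfinj hHe]
              · rw [if_neg hS'] at hce
                have := hc'lt e (Finset.mem_sdiff.mpr ⟨heR, hS'⟩)
                omega
            · rintro rfl
              exact ⟨hMR u, by rw [if_pos (hMS u)]; omega, by rw [hMH u, hu]⟩
          rw [this, Finset.card_singleton]

/-- The degree of a vertex in a multigraph given by an incidence map
`ends : E → Sym2 V` (a loop counts twice). -/
def multigraphDegree {V E : Type} [DecidableEq V] [Fintype E]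
    (ends : E → Sym2 V) (v : V) : ℕ :=
  ∑ e : E, (if ends e = Sym2.mk v v then 2 else if v ∈ ends e then 1 else 0)

/-- Petersen's 2-factor theorem: the edge set of every `2k`-regular finite
multigraph can be partitioned into `k` spanning `2`-regular subgraphs. -/
theorem stmt_1 {V E : Type} [DecidableEq V] [Fintype V] [Fintype E]
    (k : ℕ) (ends : E → Sym2 V)
    (hreg : ∀ v : V, multigraphDegree ends v = 2 * k) :
    ∃ c : E → Fin k, ∀ i : Fin k, ∀ v : V,
      (∑ e : Finset.univ.filter (fun e : E => c e = i),
        (if ends e = Sym2.mk v v then 2 else if v ∈ ends (e : E) then 1 else 0)) = 2 := by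
  classical
  have hmd : ∀ v, multigraphDegree ends v = ∑ e ∈ (univ : Finset E), mdeg ends v e := by
    intro v
    rfl
  have heven : ∀ v, Even (∑ e ∈ (univ : Finset E), mdeg ends v e) := by
    intro v
    rw [← hmd, hreg v]
    exact ⟨k, by ring⟩
  obtain ⟨T, H, h1, h2⟩ := exists_balanced_orientation ends univ heven
  have hsum : ∀ v, ∑ e ∈ (univ : Finset E), mdeg ends v e =
      ((univ : Finset E).filter fun e => T e = v).card +
      ((univ : Finset E).filter fun e => H e = v).card := by
    intro v
    rw [Finset.card_filter, Finset.card_filter, ← Finset.sum_add_distrib]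
    exact Finset.sum_congr rfl fun e he => mdeg_eq ends v e _ _ (h1 e he)
  have hTcard : ∀ v, ((univ : Finset E).filter fun e => T e = v).card = k := by
    intro v
    have hd := hmd v
    rw [hreg v, hsum v, ← h2 v] at hd
    omega
  have hHcard : ∀ v, ((univ : Finset E).filter fun e => H e = v).card = k := by
    intro v
    rw [← h2 v]
    exact hTcard v
  obtain ⟨c', hlt, hc⟩ := bipartite_decomp T H k univ hTcard hHcard
  refine ⟨fun e => ⟨c' e, hlt e (Finset.mem_univ e)⟩, ?_⟩
  intro i v
  have hconv : (∑ e : Finset.univ.filter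
        (fun e : E => (⟨c' e, hlt e (Finset.mem_univ e)⟩ : Fin k) = i),
      (if ends (e : E) = Sym2.mk v v then 2 else if v ∈ ends (e : E) then 1 else 0)) =
      ∑ e ∈ Finset.univ.filter
        (fun e : E => (⟨c' e, hlt e (Finset.mem_univ e)⟩ : Fin k) = i), mdeg ends v e := by
    exact Finset.sum_coe_sort
      (Finset.univ.filter (fun e : E => (⟨c' e, hlt e (Finset.mem_univ e)⟩ : Fin k) = i))
      (fun e => mdeg ends v e)
  rw [hconv]
  have hfc : ∀ e : E, ((⟨c' e, hlt e (Finset.mem_univ e)⟩ : Fin k) = i) ↔ c' e = i.val := by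
    intro e
    rw [Fin.ext_iff]
  set F := Finset.univ.filter
      (fun e : E => (⟨c' e, hlt e (Finset.mem_univ e)⟩ : Fin k) = i) with hF
  have hsum2 : ∑ e ∈ F, mdeg ends v e =
      (F.filter fun e => T e = v).card + (F.filter fun e => H e = v).card := by
    rw [Finset.card_filter, Finset.card_filter, ← Finset.sum_add_distrib]
    exact Finset.sum_congr rfl fun e _ => mdeg_eq ends v e _ _ (h1 e (Finset.mem_univ e))
  have hFT : F.filter (fun e => T e = v) =
      (univ : Finset E).filter (fun e => c' e = i.val ∧ T e = v) := by
    rw [hF, Finset.filter_filter]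
    exact Finset.filter_congr fun e _ => by rw [hfc e]
  have hFH : F.filter (fun e => H e = v) =
      (univ : Finset E).filter (fun e => c' e = i.val ∧ H e = v) := by
    rw [hF, Finset.filter_filter]
    exact Finset.filter_congr fun e _ => by rw [hfc e]
  rw [hsum2, hFT, hFH, (hc i.val i.isLt v).1, (hc i.val i.isLt v).2]
end

section
/- Let G be a finite (2c+1)-regular simple graph. Then G covers the one-vertex graph F(1,c) (one semi-edge and c loops) if and only if G has a perfect matching. More precisely: there exists a partition of the edge set of G into one perfect matching and c 2-factors if and only if G has a perfect matching. -/
open Finset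

namespace PetersenAux

set_option linter.unusedSectionVars false
set_option maxHeartbeats 1000000

variable {V : Type} [Fintype V] [DecidableEq V]






lemma dart_count_balance {H : SimpleGraph V} {u w : V} (p : H.Walk u w) (v : V) :
    (p.darts.countP (fun d => d.fst = v)) + (if v = w then 1 else 0) =
      (p.darts.countP (fun d => d.snd = v)) + (if v = u then 1 else 0) := by
  induction p with
  | nil => simp
  | cons h q ih =>
    rename_i a b c
    have hab : a ≠ b := h.ne
    simp only [SimpleGraph.Walk.darts_cons, List.countP_cons]
    rcases eq_or_ne v a with h1 | h1 <;> rcases eq_or_ne v b with h2 | h2 <;>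
      rcases eq_or_ne v c with h3 | h3 <;>
      simp_all [eq_comm] <;> omega


lemma exists_closed_trail {H : SimpleGraph V} [DecidableRel H.Adj]
    (heven : ∀ v, Even (H.degree v)) (hne : H.edgeFinset.Nonempty) :
    ∃ (u : V) (p : H.Walk u u), p.IsTrail ∧ 0 < p.length := by
  classical
  -- trails have bounded length
  have hbd : ∀ {x y : V} (p : H.Walk x y), p.IsTrail → p.length ≤ H.edgeFinset.card := by
    intro x y p hp
    have h1 : p.edges.toFinset ⊆ H.edgeFinset := by
      intro e he
      rw [List.mem_toFinset] at he
      exact SimpleGraph.mem_edgeFinset.2 (p.edges_subset_edgeSet he)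
    calc p.length = p.edges.length := (p.length_edges).symm
      _ = p.edges.toFinset.card := (List.toFinset_card_of_nodup hp.edges_nodup).symm
      _ ≤ H.edgeFinset.card := Finset.card_le_card h1
  set P : ℕ → Prop := fun n => ∃ (x y : V) (p : H.Walk x y), p.IsTrail ∧ p.length = n with hP
  have hP1 : P 1 := by
    obtain ⟨e, he⟩ := hne
    rw [SimpleGraph.mem_edgeFinset] at he
    induction e with
    | _ x y =>
      have hxy : H.Adj x y := he
      exact ⟨x, y, SimpleGraph.Walk.cons hxy SimpleGraph.Walk.nil, by simp [hxy.ne], rfl⟩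
  set N := Nat.findGreatest P H.edgeFinset.card with hN
  have hPN : P N := Nat.findGreatest_spec (m := 1)
    (by obtain ⟨x, y, p, hp, hl⟩ := hP1; rw [← hl]; exact hbd p hp) hP1
  obtain ⟨x, y, p, hp, hl⟩ := hPN
  have hmax : ∀ {x' y' : V} (q : H.Walk x' y'), q.IsTrail → q.length ≤ N := by
    intro x' y' q hq
    exact Nat.le_findGreatest (hbd q hq) ⟨x', y', q, hq, rfl⟩
  have hN1 : 1 ≤ N := Nat.le_findGreatest
    (by obtain ⟨x', y', q, hq, hl'⟩ := hP1; rw [← hl']; exact hbd q hq) hP1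
  -- all edges at y are in p.edges
  have hall : ∀ e ∈ H.incidenceFinset y, e ∈ p.edges := by
    intro e he
    rw [SimpleGraph.mem_incidenceFinset] at he
    by_contra hne'
    obtain ⟨he1, he2⟩ := he
    -- e = s(y, z)
    obtain ⟨z, rfl⟩ := Sym2.mem_iff_exists.mp he2
    have hadj : H.Adj y z := he1
    have hq : (p.concat hadj).IsTrail := by
      rw [SimpleGraph.Walk.isTrail_def, SimpleGraph.Walk.edges_concat]
      rw [List.concat_eq_append, List.nodup_append]
      refine ⟨hp.edges_nodup, List.nodup_singleton _, ?_⟩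
      intro a ha b hb hab
      simp only [List.mem_singleton] at hb
      subst hb; subst hab
      exact hne' ha
    have := hmax _ hq
    rw [SimpleGraph.Walk.length_concat, hl] at this
    omega
  -- if x ≠ y, parity contradiction
  have hxy : x = y := by
    by_contra hxy
    have hcount : (p.edges.countP fun e => y ∈ e) = H.degree y := by
      have hnd := hp.edges_nodup
      rw [← SimpleGraph.card_incidenceFinset_eq_degree]
      rw [List.countP_eq_length_filter]
      rw [← List.toFinset_card_of_nodup (List.Nodup.filter _ hnd)]
      congr 1
      ext e
      simp only [List.mem_toFinset, List.mem_filter, decide_eq_true_eq,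
        SimpleGraph.mem_incidenceFinset]
      constructor
      · rintro ⟨he, hy⟩
        exact ⟨p.edges_subset_edgeSet he, hy⟩
      · rintro ⟨he, hy⟩
        refine ⟨hall e ?_, hy⟩
        rw [SimpleGraph.mem_incidenceFinset]
        exact ⟨he, hy⟩
    have hev := (hp.even_countP_edges_iff y).mpr
    have : Even (p.edges.countP fun e => y ∈ e) := by
      rw [hcount]; exact heven y
    exact ((hp.even_countP_edges_iff y).mp this hxy).2 rfl
  subst hxy
  exact ⟨x, p, hp, by omega⟩


lemma countP_or_disjoint {α : Type*} (l : List α) (p q : α → Prop) [DecidablePred p]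
    [DecidablePred q] (h : ∀ a ∈ l, ¬(p a ∧ q a)) :
    l.countP (fun a => p a ∨ q a) = l.countP (fun a => p a) + l.countP (fun a => q a) := by
  induction l with
  | nil => simp
  | cons a l ih =>
    have ha := h a List.mem_cons_self
    simp only [List.countP_cons]
    rw [ih (fun b hb => h b (List.mem_cons_of_mem a hb))]
    by_cases hp : p a <;> by_cases hq : q a
    · exact absurd ⟨hp, hq⟩ ha
    all_goals (simp [hp, hq]; try omega)

lemma card_filter_toFinset {α : Type*} [DecidableEq α] (l : List α) (hl : l.Nodup)
    (q : α → Prop) [DecidablePred q] :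
    (l.toFinset.filter q).card = l.countP (fun a => q a) := by
  rw [List.countP_eq_length_filter, ← List.toFinset_card_of_nodup (hl.filter _),
    List.toFinset_filter]
  congr 1
  ext a
  simp

lemma exists_orientation : ∀ (n : ℕ) (H : SimpleGraph V) [DecidableRel H.Adj],
    H.edgeFinset.card ≤ n → (∀ v, Even (H.degree v)) →
    ∃ T : Finset (V × V),
      (∀ a ∈ T, H.Adj a.1 a.2) ∧
      (∀ u v : V, H.Adj u v → ((u, v) ∈ T ↔ (v, u) ∉ T)) ∧
      (∀ v : V, (T.filter (fun a => a.1 = v)).card = (T.filter (fun a => a.2 = v)).card) := by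
  intro n
  induction n with
  | zero =>
    intro H _ hcard _
    refine ⟨∅, by simp, fun u v huv => absurd ?_ (by simp [Finset.card_eq_zero.mp (Nat.le_zero.mp hcard)] : ¬(s(u,v) ∈ H.edgeFinset)), by simp⟩
    exact SimpleGraph.mem_edgeFinset.mpr huv
  | succ n ih =>
    intro H _ hcard heven
    by_cases hE : H.edgeFinset.Nonempty
    · -- get a closed trail
      obtain ⟨u, p, hp, hlen⟩ := exists_closed_trail heven hE
      classical
      set S : Finset (Sym2 V) := p.edges.toFinset with hS
      have hSsub : S ⊆ H.edgeFinset := by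
        intro e he
        rw [hS, List.mem_toFinset] at he
        exact SimpleGraph.mem_edgeFinset.mpr (p.edges_subset_edgeSet he)
      have hSne : S.Nonempty := by
        have h0 : 0 < p.edges.length := by rw [p.length_edges]; exact hlen
        obtain ⟨e, he⟩ := List.exists_mem_of_length_pos h0
        exact ⟨e, List.mem_toFinset.mpr he⟩
      have hedges_eq : p.edges = p.darts.map SimpleGraph.Dart.edge := rfl
      have hdnodup : p.darts.Nodup := by
        have := hp.edges_nodup
        rw [hedges_eq] at this
        exact this.of_map _
      -- the deleted graph
      set H' : SimpleGraph V := H.deleteEdges ↑S with hH'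
      letI : DecidableRel H'.Adj := Classical.decRel _
      have hH'adj : ∀ a b : V, H'.Adj a b ↔ H.Adj a b ∧ s(a, b) ∉ S := by
        intro a b
        rw [hH', SimpleGraph.deleteEdges_adj, Finset.mem_coe]
      have hE' : H'.edgeFinset = H.edgeFinset \ S := by
        exact SimpleGraph.edgeFinset_deleteEdges (G := H) S
      have hcard' : H'.edgeFinset.card ≤ n := by
        rw [hE', Finset.card_sdiff_of_subset hSsub]
        have := Finset.card_le_card hSsub
        have h1 : 1 ≤ S.card := Finset.card_pos.mpr hSne
        omega
      -- dart counts
      have hbal : ∀ v : V, p.darts.countP (fun d => d.fst = v) =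
          p.darts.countP (fun d => d.snd = v) := by
        intro v
        have := dart_count_balance p v
        omega
      have hScount : ∀ v : V, (S.filter (fun e => v ∈ e)).card =
          p.darts.countP (fun d => d.fst = v) + p.darts.countP (fun d => d.snd = v) := by
        intro v
        rw [hS, card_filter_toFinset _ hp.edges_nodup, hedges_eq, List.countP_map]
        rw [← countP_or_disjoint p.darts (fun d => d.fst = v) (fun d => d.snd = v)
          (fun d _ => by rintro ⟨h1, h2⟩; exact d.adj.ne (h1.trans h2.symm))]
        refine List.countP_congr ?_
        rintro ⟨⟨a, b⟩, hd⟩ _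
        simp only [Function.comp_apply, decide_eq_true_eq]
        show v ∈ s(a, b) ↔ _
        rw [Sym2.mem_iff]
        constructor
        · rintro (h | h)
          exacts [Or.inl h.symm, Or.inr h.symm]
        · rintro (h | h)
          exacts [Or.inl h.symm, Or.inr h.symm]
      have hdeg' : ∀ v : V, H'.degree v = H.degree v - (S.filter (fun e => v ∈ e)).card := by
        intro v
        have hinc : H'.incidenceFinset v = H.incidenceFinset v \ S.filter (fun e => v ∈ e) := by
          ext e
          simp only [SimpleGraph.mem_incidenceFinset, Finset.mem_sdiff, Finset.mem_filter,
            SimpleGraph.incidenceSet, Set.mem_setOf_eq, Set.mem_sep_iff, hH',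
            SimpleGraph.edgeSet_deleteEdges, Set.mem_diff, Finset.mem_coe]
          tauto
        have hsub2 : S.filter (fun e => v ∈ e) ⊆ H.incidenceFinset v := by
          intro e he
          rw [Finset.mem_filter] at he
          rw [SimpleGraph.mem_incidenceFinset]
          exact ⟨SimpleGraph.mem_edgeFinset.mp (hSsub he.1), he.2⟩
        have h1 : (H'.incidenceFinset v).card
            = (H.incidenceFinset v).card - (S.filter (fun e => v ∈ e)).card := by
          rw [hinc, Finset.card_sdiff_of_subset hsub2]
        rw [SimpleGraph.card_incidenceFinset_eq_degree,
          SimpleGraph.card_incidenceFinset_eq_degree] at h1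
        exact h1
      have heven' : ∀ v : V, Even (H'.degree v) := by
        intro v
        rw [hdeg' v]
        refine Even.tsub (heven v) ?_
        rw [hScount v, ← hbal v]
        exact ⟨_, rfl⟩
      -- recurse
      obtain ⟨T', hT'1, hT'2, hT'3⟩ := ih H' hcard' heven'
      -- the darts of p as pairs
      set T₁ : Finset (V × V) := (p.darts.map SimpleGraph.Dart.toProd).toFinset with hT₁
      have htoProd_inj : Function.Injective (SimpleGraph.Dart.toProd : H.Dart → V × V) :=
        fun d₁ d₂ h => SimpleGraph.Dart.ext _ _ h
      have hmemT₁ : ∀ a b : V, ((a, b) ∈ T₁ ↔ ∃ d ∈ p.darts, d.toProd = (a, b)) := by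
        intro a b
        rw [hT₁, List.mem_toFinset, List.mem_map]
      have hT₁S : ∀ x ∈ T₁, s(x.1, x.2) ∈ S ∧ H.Adj x.1 x.2 := by
        rintro ⟨a, b⟩ hx
        obtain ⟨d, hd, hdp⟩ := (hmemT₁ a b).mp hx
        constructor
        · rw [hS, List.mem_toFinset, hedges_eq]
          refine List.mem_map.mpr ⟨d, hd, ?_⟩
          rw [SimpleGraph.Dart.edge, hdp]
        · have := d.adj
          rw [hdp] at this
          exact this
      -- exactly one direction of each trail edge is in T₁
      have hone : ∀ a b : V, H.Adj a b → s(a, b) ∈ S → ((a, b) ∈ T₁ ↔ (b, a) ∉ T₁) := by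
        intro a b hab habS
        have hnotboth : ¬(((a, b) ∈ T₁) ∧ ((b, a) ∈ T₁)) := by
          rintro ⟨h1, h2⟩
          obtain ⟨d₁, hd₁, hdp₁⟩ := (hmemT₁ a b).mp h1
          obtain ⟨d₂, hd₂, hdp₂⟩ := (hmemT₁ b a).mp h2
          have hne12 : d₁ ≠ d₂ := by
            intro h
            rw [h, hdp₂] at hdp₁
            exact hab.ne (by simpa using congrArg Prod.fst hdp₁.symm)
          have hedgeeq : d₁.edge = d₂.edge := by
            rw [SimpleGraph.Dart.edge, SimpleGraph.Dart.edge, hdp₁, hdp₂]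
            exact Sym2.eq_swap
          have hmapnodup : (p.darts.map SimpleGraph.Dart.edge).Nodup := by
            rw [← hedges_eq]; exact hp.edges_nodup
          exact hne12 (List.inj_on_of_nodup_map hmapnodup hd₁ hd₂ hedgeeq)
        have hsome : ((a, b) ∈ T₁) ∨ ((b, a) ∈ T₁) := by
          rw [hS, List.mem_toFinset, hedges_eq] at habS
          obtain ⟨d, hd, hde⟩ := List.mem_map.mp habS
          have := SimpleGraph.dart_edge_eq_mk'_iff.mp hde
          rcases this with h | h
          · exact Or.inl ((hmemT₁ a b).mpr ⟨d, hd, h⟩)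
          · exact Or.inr ((hmemT₁ b a).mpr ⟨d, hd, h⟩)
        tauto
      -- combine
      have hdisj : Disjoint T' T₁ := by
        rw [Finset.disjoint_left]
        intro x hx hx1
        have h1 := hT'1 x hx
        rw [hH'adj] at h1
        exact h1.2 (hT₁S x hx1).1
      refine ⟨T' ∪ T₁, ?_, ?_, ?_⟩
      · rintro x hx
        rcases Finset.mem_union.mp hx with h | h
        · exact (hH'adj x.1 x.2).mp (hT'1 x h) |>.1
        · exact (hT₁S x h).2
      · intro a b hab
        by_cases habS : s(a, b) ∈ S
        · have hbaS : s(b, a) ∈ S := by rwa [Sym2.eq_swap]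
          have h1 : (a, b) ∉ T' := fun h => ((hH'adj a b).mp (hT'1 _ h)).2 habS
          have h2 : (b, a) ∉ T' := fun h => ((hH'adj b a).mp (hT'1 _ h)).2 hbaS
          simp only [Finset.mem_union, h1, h2, false_or]
          exact (hone a b hab habS).trans (by tauto)
        · have hbaS : s(b, a) ∉ S := by rwa [Sym2.eq_swap]
          have h1 : (a, b) ∉ T₁ := fun h => habS (hT₁S _ h).1
          have h2 : (b, a) ∉ T₁ := fun h => hbaS (hT₁S _ h).1
          have hadj' : H'.Adj a b := (hH'adj a b).mpr ⟨hab, habS⟩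
          simp only [Finset.mem_union, h1, h2, or_false]
          exact (hT'2 a b hadj').trans (by tauto)
      · intro v
        rw [Finset.filter_union, Finset.filter_union,
          Finset.card_union_of_disjoint (Finset.disjoint_filter_filter hdisj),
          Finset.card_union_of_disjoint (Finset.disjoint_filter_filter hdisj),
          hT'3 v]
        congr 1
        have hnodupmap : (p.darts.map SimpleGraph.Dart.toProd).Nodup :=
          hdnodup.map htoProd_inj
        rw [hT₁, card_filter_toFinset _ hnodupmap, card_filter_toFinset _ hnodupmap,
          List.countP_map, List.countP_map]
        exact hbal v
    · -- no edges
      rw [Finset.not_nonempty_iff_eq_empty] at hE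
      refine ⟨∅, by simp, fun u v huv => absurd ?_ (by simp [hE] : ¬(s(u,v) ∈ H.edgeFinset)), by simp⟩
      exact SimpleGraph.mem_edgeFinset.mpr huv


lemma degree_deleteEdges (H : SimpleGraph V) [DecidableRel H.Adj] (S : Finset (Sym2 V))
    (hSsub : S ⊆ H.edgeFinset) [DecidableRel (H.deleteEdges ↑S).Adj] (v : V) :
    (H.deleteEdges ↑S).degree v = H.degree v - (S.filter (fun e => v ∈ e)).card := by
  classical
  have hinc : (H.deleteEdges ↑S).incidenceFinset v
      = H.incidenceFinset v \ S.filter (fun e => v ∈ e) := by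
    ext e
    simp only [SimpleGraph.mem_incidenceFinset, Finset.mem_sdiff, Finset.mem_filter,
      SimpleGraph.incidenceSet, Set.mem_setOf_eq, Set.mem_sep_iff,
      SimpleGraph.edgeSet_deleteEdges, Set.mem_diff, Finset.mem_coe]
    tauto
  have hsub2 : S.filter (fun e => v ∈ e) ⊆ H.incidenceFinset v := by
    intro e he
    rw [Finset.mem_filter] at he
    rw [SimpleGraph.mem_incidenceFinset]
    exact ⟨SimpleGraph.mem_edgeFinset.mp (hSsub he.1), he.2⟩
  have h1 : ((H.deleteEdges ↑S).incidenceFinset v).card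
      = (H.incidenceFinset v).card - (S.filter (fun e => v ∈ e)).card := by
    rw [hinc, Finset.card_sdiff_of_subset hsub2]
  rw [SimpleGraph.card_incidenceFinset_eq_degree,
    SimpleGraph.card_incidenceFinset_eq_degree] at h1
  exact h1

lemma exists_two_factor (H : SimpleGraph V) [DecidableRel H.Adj] {k : ℕ} (hk : 0 < k)
    (hreg : ∀ v, H.degree v = 2 * k) :
    ∃ f : V → V, Function.Bijective f ∧ (∀ v, H.Adj v (f v)) ∧ (∀ v, f (f v) ≠ v) := by
  classical
  obtain ⟨T, hT1, hT2, hT3⟩ := exists_orientation H.edgeFinset.card H le_rfl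
    (fun v => by rw [hreg v]; exact even_two_mul k)
  -- out-degree + in-degree = degree
  have houtin : ∀ v : V, (T.filter (fun a => a.1 = v)).card
      + (T.filter (fun a => a.2 = v)).card = H.degree v := by
    intro v
    have hdisj : Disjoint (T.filter (fun a => a.1 = v)) (T.filter (fun a => a.2 = v)) := by
      rw [Finset.disjoint_left]
      intro a ha1 ha2
      rw [Finset.mem_filter] at ha1 ha2
      have := hT1 a ha1.1
      rw [ha1.2, ha2.2] at this
      exact H.loopless.irrefl v this
    rw [← Finset.card_union_of_disjoint hdisj, ← Finset.filter_or,
      ← SimpleGraph.card_incidenceFinset_eq_degree]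
    apply Finset.card_bij (fun a _ => s(a.1, a.2))
    · rintro ⟨a, b⟩ ha
      rw [Finset.mem_filter] at ha
      rw [SimpleGraph.mem_incidenceFinset]
      refine ⟨(hT1 _ ha.1), ?_⟩
      rcases ha.2 with h | h <;> simp [← h]
    · rintro ⟨a1, a2⟩ ha ⟨b1, b2⟩ hb hab
      rw [Finset.mem_filter] at ha hb
      rw [Sym2.eq_iff] at hab
      rcases hab with ⟨rfl, rfl⟩ | ⟨rfl, rfl⟩
      · rfl
      · exfalso
        have hadj := hT1 _ ha.1
        exact ((hT2 _ _ hadj).mp ha.1) hb.1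
    · intro e he
      rw [SimpleGraph.mem_incidenceFinset] at he
      obtain ⟨he1, he2⟩ := he
      obtain ⟨w, rfl⟩ := Sym2.mem_iff_exists.mp he2
      have hadj : H.Adj v w := he1
      by_cases h : (v, w) ∈ T
      · exact ⟨(v, w), Finset.mem_filter.mpr ⟨h, Or.inl rfl⟩, rfl⟩
      · have h' : (w, v) ∈ T := by
          by_contra h''
          exact h ((hT2 v w hadj).mpr h'')
        exact ⟨(w, v), Finset.mem_filter.mpr ⟨h', Or.inr rfl⟩, Sym2.eq_swap⟩
  have hout : ∀ v : V, (T.filter (fun a => a.1 = v)).card = k := by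
    intro v
    have h1 := houtin v
    have h2 := hT3 v
    rw [hreg v] at h1
    omega
  have hin : ∀ v : V, (T.filter (fun a => a.2 = v)).card = k := by
    intro v
    rw [← hT3 v]
    exact hout v
  -- Hall's condition
  have hall : ∀ A : Finset V, A.card ≤ (Finset.univ.filter
      (fun w => ∃ a ∈ A, (a, w) ∈ T)).card := by
    intro A
    set NB := Finset.univ.filter (fun w => ∃ a ∈ A, (a, w) ∈ T) with hNB
    have h1 : (T.filter (fun x => x.1 ∈ A)).card = k * A.card := by
      have : T.filter (fun x => x.1 ∈ A) = A.biUnion (fun v => T.filter (fun x => x.1 = v)) := by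
        ext x
        simp only [Finset.mem_filter, Finset.mem_biUnion]
        constructor
        · rintro ⟨hx, hxa⟩; exact ⟨x.1, hxa, hx, rfl⟩
        · rintro ⟨v, hv, hx, rfl⟩; exact ⟨hx, hv⟩
      rw [this, Finset.card_biUnion, Finset.sum_congr rfl (fun v _ => hout v),
        Finset.sum_const, smul_eq_mul, mul_comm]
      intro x _ y _ hxy
      simp only [Function.onFun]
      rw [Finset.disjoint_left]
      intro a ha1 ha2
      rw [Finset.mem_filter] at ha1 ha2
      exact hxy (ha1.2 ▸ ha2.2 ▸ rfl)
    have h2 : (T.filter (fun x => x.2 ∈ NB)).card = k * NB.card := by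
      have : T.filter (fun x => x.2 ∈ NB) = NB.biUnion (fun v => T.filter (fun x => x.2 = v)) := by
        ext x
        simp only [Finset.mem_filter, Finset.mem_biUnion]
        constructor
        · rintro ⟨hx, hxa⟩; exact ⟨x.2, hxa, hx, rfl⟩
        · rintro ⟨v, hv, hx, rfl⟩; exact ⟨hx, hv⟩
      rw [this, Finset.card_biUnion, Finset.sum_congr rfl (fun v _ => hin v),
        Finset.sum_const, smul_eq_mul, mul_comm]
      intro x _ y _ hxy
      simp only [Function.onFun]
      rw [Finset.disjoint_left]
      intro a ha1 ha2
      rw [Finset.mem_filter] at ha1 ha2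
      exact hxy (ha1.2 ▸ ha2.2 ▸ rfl)
    have hsub : T.filter (fun x => x.1 ∈ A) ⊆ T.filter (fun x => x.2 ∈ NB) := by
      intro x hx
      rw [Finset.mem_filter] at hx ⊢
      refine ⟨hx.1, ?_⟩
      rw [hNB, Finset.mem_filter]
      exact ⟨Finset.mem_univ _, x.1, hx.2, by rw [Prod.mk.eta]; exact hx.1⟩
    have := Finset.card_le_card hsub
    rw [h1, h2] at this
    exact Nat.le_of_mul_le_mul_left this hk
  obtain ⟨f, hfinj, hfT⟩ :=
    (Fintype.all_card_le_filter_rel_iff_exists_injective (fun a b => (a, b) ∈ T)).mp hall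
  refine ⟨f, (Finite.injective_iff_bijective).mp hfinj, fun v => hT1 _ (hfT v), ?_⟩
  intro v hffv
  have h1 : (v, f v) ∈ T := hfT v
  have h2 : (f v, v) ∈ T := by
    have := hfT (f v)
    rwa [hffv] at this
  exact ((hT2 v (f v) (hT1 _ h1)).mp h1) h2


lemma exists_decomposition : ∀ (k : ℕ) (H : SimpleGraph V) [DecidableRel H.Adj],
    (∀ v, H.degree v = 2 * k) →
    ∃ col : Sym2 V → ℕ, (∀ e ∈ H.edgeFinset, col e < k) ∧
      ∀ i < k, ∀ v : V, ((H.edgeFinset.filter (fun e => v ∈ e ∧ col e = i)).card = 2) := by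
  intro k
  induction k with
  | zero =>
    intro H _ hreg
    refine ⟨fun _ => 0, fun e he => absurd he ?_, fun i hi => absurd hi (by omega)⟩
    intro he
    rw [SimpleGraph.mem_edgeFinset] at he
    induction e with
    | _ x y =>
      have hadj : H.Adj x y := he
      have h1 : y ∈ H.neighborFinset x := (SimpleGraph.mem_neighborFinset _ _ _).mpr hadj
      have h2 : 0 < H.degree x := Finset.card_pos.mpr ⟨y, h1⟩
      rw [hreg x] at h2
      omega
  | succ k ih =>
    intro H _ hreg
    classical
    obtain ⟨f, hfbij, hfadj, hf2⟩ := exists_two_factor H (Nat.succ_pos k) hreg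
    set g := Function.surjInv hfbij.surjective with hg
    have hgf : ∀ v, f (g v) = v := fun v => Function.surjInv_eq hfbij.surjective v
    set S : Finset (Sym2 V) := Finset.univ.image (fun v => s(v, f v)) with hS
    have hSsub : S ⊆ H.edgeFinset := by
      intro e he
      rw [hS, Finset.mem_image] at he
      obtain ⟨v, _, rfl⟩ := he
      exact SimpleGraph.mem_edgeFinset.mpr (hfadj v)
    have hSfil : ∀ v : V, S.filter (fun e => v ∈ e) = {s(v, f v), s(g v, v)} := by
      intro v
      ext e
      rw [Finset.mem_filter, Finset.mem_insert, Finset.mem_singleton]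
      constructor
      · rintro ⟨heS, hev⟩
        rw [hS, Finset.mem_image] at heS
        obtain ⟨x, _, rfl⟩ := heS
        rcases Sym2.mem_iff.mp hev with rfl | h
        · exact Or.inl rfl
        · right
          have hx : x = g v := hfbij.injective (by rw [hgf]; exact h.symm)
          subst hx
          rw [hgf]
      · rintro (rfl | rfl)
        · exact ⟨Finset.mem_image.mpr ⟨v, Finset.mem_univ _, rfl⟩, by simp⟩
        · refine ⟨Finset.mem_image.mpr ⟨g v, Finset.mem_univ _, by rw [hgf]⟩, by simp⟩
    have hSne : ∀ v : V, s(v, f v) ≠ s(g v, v) := by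
      intro v h
      rw [Sym2.eq_iff] at h
      rcases h with ⟨hv, hfv⟩ | ⟨-, hfv⟩
      · exact (hfadj v).ne' hfv
      · exact hf2 v (by rw [hfv, hgf])
    have hScard : ∀ v : V, (S.filter (fun e => v ∈ e)).card = 2 := by
      intro v
      rw [hSfil v, Finset.card_insert_of_notMem (by simpa using hSne v),
        Finset.card_singleton]
    set H' : SimpleGraph V := H.deleteEdges ↑S with hH'
    letI : DecidableRel H'.Adj := Classical.decRel _
    have hE' : H'.edgeFinset = H.edgeFinset \ S :=
      SimpleGraph.edgeFinset_deleteEdges (G := H) S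
    have hdeg' : ∀ v : V, H'.degree v = 2 * k := by
      intro v
      have hd := degree_deleteEdges H S hSsub v
      rw [hScard v, hreg v] at hd
      exact hd.trans (by omega)
    obtain ⟨col', hcol'lt, hcol'cnt⟩ := ih H' hdeg'
    refine ⟨fun e => if e ∈ S then k else col' e, ?_, ?_⟩
    · intro e he
      by_cases heS : e ∈ S
      · simp [heS]
      · have : e ∈ H'.edgeFinset := by rw [hE', Finset.mem_sdiff]; exact ⟨he, heS⟩
        simp only [heS, if_neg, if_false]
        exact Nat.lt_succ_of_lt (hcol'lt e this)
    · intro i hi v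
      rcases Nat.lt_succ_iff_lt_or_eq.mp hi with hik | hik
      · -- colour i < k : comes from H'
        have : H.edgeFinset.filter (fun e => v ∈ e ∧ (if e ∈ S then k else col' e) = i)
            = H'.edgeFinset.filter (fun e => v ∈ e ∧ col' e = i) := by
          ext e
          rw [Finset.mem_filter, Finset.mem_filter, hE', Finset.mem_sdiff]
          constructor
          · rintro ⟨he, hv, hcol⟩
            by_cases heS : e ∈ S
            · rw [if_pos heS] at hcol; omega
            · rw [if_neg heS] at hcol
              exact ⟨⟨he, heS⟩, hv, hcol⟩
          · rintro ⟨⟨he, heS⟩, hv, hcol⟩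
            exact ⟨he, hv, by rw [if_neg heS]; exact hcol⟩
        rw [this]
        exact hcol'cnt i hik v
      · -- colour k : the 2-factor S
        rw [hik]
        have : H.edgeFinset.filter (fun e => v ∈ e ∧ (if e ∈ S then k else col' e) = k)
            = S.filter (fun e => v ∈ e) := by
          ext e
          rw [Finset.mem_filter, Finset.mem_filter]
          constructor
          · rintro ⟨he, hv, hcol⟩
            by_cases heS : e ∈ S
            · exact ⟨heS, hv⟩
            · rw [if_neg heS] at hcol
              have : e ∈ H'.edgeFinset := by rw [hE', Finset.mem_sdiff]; exact ⟨he, heS⟩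
              exact absurd hcol (Nat.ne_of_lt (hcol'lt e this))
          · rintro ⟨heS, hv⟩
            exact ⟨hSsub heS, hv, by rw [if_pos heS]⟩
        rw [this]
        exact hScard v


lemma natCard_subtype (G : SimpleGraph V) [DecidableRel G.Adj] (P : Sym2 V → Prop)
    [DecidablePred P] :
    Nat.card {e : G.edgeSet // P ↑e} = (G.edgeFinset.filter P).card := by
  classical
  have e1 : {e : G.edgeSet // P ↑e} ≃ {e : Sym2 V // e ∈ G.edgeSet ∧ P e} :=
    Equiv.subtypeSubtypeEquivSubtypeInter _ _
  rw [Nat.card_congr e1, Nat.card_eq_fintype_card, Fintype.card_subtype]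
  congr 1
  ext e
  simp [SimpleGraph.mem_edgeFinset]

end PetersenAux

open PetersenAux

/-- A finite `(2c+1)`-regular simple graph covers `F(1,c)` (one semi-edge and `c`
loops) iff it has a perfect matching: the edge set of `G` can be partitioned into
one perfect matching (colour `0`) and `c` 2-factors (the other colours) if and
only if `G` has a perfect matching. -/
theorem stmt_4 {V : Type} [Fintype V] (c : ℕ) (G : SimpleGraph V)
    [DecidableRel G.Adj] (hreg : ∀ v : V, G.degree v = 2 * c + 1) :
    (∃ col : Sym2 V → Fin (c + 1),
        (∀ v : V, ∃! e : G.edgeSet, v ∈ (e : Sym2 V) ∧ col e = 0) ∧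
        (∀ i : Fin (c + 1), i ≠ 0 → ∀ v : V,
          Nat.card {e : G.edgeSet // v ∈ (e : Sym2 V) ∧ col e = i} = 2)) ↔
      ∃ M : G.Subgraph, M.IsPerfectMatching := by
  classical
  constructor
  · rintro ⟨col, h0, -⟩
    refine ⟨⟨Set.univ, fun v w => G.Adj v w ∧ col s(v, w) = 0,
      fun h => h.1, fun _ => Set.mem_univ _,
      ⟨fun v w h => ⟨h.1.symm, by rw [Sym2.eq_swap]; exact h.2⟩⟩⟩, ?_⟩
    rw [SimpleGraph.Subgraph.isPerfectMatching_iff]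
    intro v
    obtain ⟨e, ⟨hev, he0⟩, huniq⟩ := h0 v
    obtain ⟨w, hw⟩ := Sym2.mem_iff_exists.mp hev
    have hadj : G.Adj v w := by rw [← G.mem_edgeSet, ← hw]; exact e.2
    refine ⟨w, ⟨hadj, by rw [← hw]; exact he0⟩, ?_⟩
    rintro y ⟨hy, hy0⟩
    have hmem : s(v, y) ∈ G.edgeSet := (G.mem_edgeSet).mpr hy
    have heq := huniq ⟨s(v, y), hmem⟩ ⟨Sym2.mem_mk_left v y, hy0⟩
    have h2 : s(v, y) = s(v, w) := by rw [← hw]; exact congrArg Subtype.val heq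
    exact Sym2.congr_right.mp h2
  · rintro ⟨M, hM⟩
    have hM' := SimpleGraph.Subgraph.isPerfectMatching_iff.mp hM
    set SM : Finset (Sym2 V) := (M.edgeSet).toFinite.toFinset with hSM
    have hSMmem : ∀ e, e ∈ SM ↔ e ∈ M.edgeSet := fun e => Set.Finite.mem_toFinset _
    have hSMsub : SM ⊆ G.edgeFinset := by
      intro e he
      exact SimpleGraph.mem_edgeFinset.mpr (M.edgeSet_subset ((hSMmem e).mp he))
    have hSMfil : ∀ v : V, ∃ w : V, M.Adj v w ∧ SM.filter (fun e => v ∈ e) = {s(v, w)} := by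
      intro v
      obtain ⟨w, hw, hwu⟩ := hM' v
      refine ⟨w, hw, ?_⟩
      ext e
      rw [Finset.mem_filter, Finset.mem_singleton, hSMmem]
      constructor
      · rintro ⟨heM, hve⟩
        obtain ⟨x, rfl⟩ := Sym2.mem_iff_exists.mp hve
        have : M.Adj v x := SimpleGraph.Subgraph.mem_edgeSet.mp heM
        rw [hwu x this]
      · rintro rfl
        exact ⟨SimpleGraph.Subgraph.mem_edgeSet.mpr hw, Sym2.mem_mk_left v w⟩
    set G' : SimpleGraph V := G.deleteEdges ↑SM with hG'
    letI : DecidableRel G'.Adj := Classical.decRel _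
    have hE' : G'.edgeFinset = G.edgeFinset \ SM :=
      SimpleGraph.edgeFinset_deleteEdges (G := G) SM
    have hdeg : ∀ v : V, G'.degree v = 2 * c := by
      intro v
      have hd := degree_deleteEdges G SM hSMsub v
      obtain ⟨w, -, hfil⟩ := hSMfil v
      rw [hfil, Finset.card_singleton, hreg v] at hd
      exact hd.trans (by omega)
    obtain ⟨col', hcol'lt, hcol'cnt⟩ := exists_decomposition c G' hdeg
    set colF : Sym2 V → Fin (c + 1) := fun e => if e ∈ SM then 0
      else ⟨min (col' e + 1) c, Nat.lt_succ_of_le (Nat.min_le_right _ _)⟩ with hcolF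
    have hcolF_mem : ∀ e ∈ SM, colF e = 0 := fun e he => by rw [hcolF]; exact if_pos he
    have hcolF_not : ∀ e ∉ SM, colF e
        = ⟨min (col' e + 1) c, Nat.lt_succ_of_le (Nat.min_le_right _ _)⟩ :=
      fun e he => by rw [hcolF]; exact if_neg he
    refine ⟨colF, ?_, ?_⟩
    · -- colour 0 is a perfect matching
      intro v
      obtain ⟨w, hw, hwu⟩ := hM' v
      have hadj : G.Adj v w := M.adj_sub hw
      have hwSM : s(v, w) ∈ SM := (hSMmem _).mpr (SimpleGraph.Subgraph.mem_edgeSet.mpr hw)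
      refine ⟨⟨s(v, w), (G.mem_edgeSet).mpr hadj⟩,
        ⟨Sym2.mem_mk_left v w, hcolF_mem _ hwSM⟩, ?_⟩
      rintro ⟨e, heG⟩ ⟨hve, hcol⟩
      simp only at hve hcol
      have heSM : e ∈ SM := by
        by_contra heSM
        rw [hcolF_not e heSM] at hcol
        have heG' : e ∈ G'.edgeFinset := by
          rw [hE', Finset.mem_sdiff]
          exact ⟨SimpleGraph.mem_edgeFinset.mpr heG, heSM⟩
        have hlt := hcol'lt e heG'
        have h0 : min (col' e + 1) c = 0 := by simpa using congrArg Fin.val hcol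
        omega
      obtain ⟨x, rfl⟩ := Sym2.mem_iff_exists.mp hve
      have : M.Adj v x := SimpleGraph.Subgraph.mem_edgeSet.mp ((hSMmem _).mp heSM)
      have hx : x = w := hwu x this
      subst hx
      rfl
    · -- nonzero colours are 2-factors
      intro i hi v
      rw [natCard_subtype G (fun e => v ∈ e ∧ colF e = i)]
      have hiv : 1 ≤ (i : ℕ) := by
        rcases Nat.eq_zero_or_pos (i : ℕ) with h | h
        · exact absurd (Fin.ext h) hi
        · exact h
      have hivc : (i : ℕ) ≤ c := by omega
      set j : ℕ := (i : ℕ) - 1 with hj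
      have hjc : j < c := by omega
      have hfe : G.edgeFinset.filter (fun e => v ∈ e ∧ colF e = i)
          = G'.edgeFinset.filter (fun e => v ∈ e ∧ col' e = j) := by
        ext e
        rw [Finset.mem_filter, Finset.mem_filter, hE', Finset.mem_sdiff]
        constructor
        · rintro ⟨he, hv, hcol⟩
          by_cases heSM : e ∈ SM
          · rw [hcolF_mem e heSM] at hcol
            exact absurd hcol.symm hi
          · rw [hcolF_not e heSM] at hcol
            have heG' : e ∈ G'.edgeFinset := by rw [hE', Finset.mem_sdiff]; exact ⟨he, heSM⟩
            have hlt := hcol'lt e heG'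
            have h0 : min (col' e + 1) c = (i : ℕ) := by simpa using congrArg Fin.val hcol
            exact ⟨⟨he, heSM⟩, hv, by omega⟩
        · rintro ⟨⟨he, heSM⟩, hv, hcol⟩
          refine ⟨he, hv, ?_⟩
          rw [hcolF_not e heSM]
          have heG' : e ∈ G'.edgeFinset := by rw [hE', Finset.mem_sdiff]; exact ⟨he, heSM⟩
          have hlt := hcol'lt e heG'
          apply Fin.ext
          show min (col' e + 1) c = (i : ℕ)
          omega
      rw [hfe]
      exact hcol'cnt j hjc v
end

section
/- Let LT be the graph obtained from the complete bipartite graph K_{2,3} with parts {p₁,p₂} and {m₁,m₂,m₃} by adding two new vertices u, v with u adjacent only to p₁ and v adjacent only to p₂ (the 'limping tripod'). Suppose f: V(LT) → {p, r, g} is a map with f(p₁)=f(p₂)=p, f maps {u,v,m₁,m₂,m₃} into {r,g}, and each of p₁, p₂ has exactly two neighbours mapped to r and exactly two mapped to g. Then f(u) = f(v). -/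
/-- Vertices of the limping tripod `LT`. -/
inductive LTV : Type
  | p1 | p2 | u | v | m1 | m2 | m3
  deriving DecidableEq

instance : Fintype LTV where
  elems := {LTV.p1, LTV.p2, LTV.u, LTV.v, LTV.m1, LTV.m2, LTV.m3}
  complete := by intro x; cases x <;> first | decide | simp

/-- The target vertices: `p` (degree 4) and the pair `r`, `g`. -/
inductive Tgt : Type
  | p | r | g
  deriving DecidableEq

open LTV Tgt

/-- Adjacency of the limping tripod: `K_{2,3}` on parts `{p1,p2}`, `{m1,m2,m3}`,
plus pendant vertices `u` adjacent to `p1` and `v` adjacent to `p2`. -/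
def LTAdj (x y : LTV) : Prop :=
  (x, y) ∈ [(p1, m1), (p1, m2), (p1, m3), (p2, m1), (p2, m2), (p2, m3),
            (u, p1), (v, p2)] ∨
  (y, x) ∈ [(p1, m1), (p1, m2), (p1, m3), (p2, m1), (p2, m2), (p2, m3),
            (u, p1), (v, p2)]

instance : DecidableRel LTAdj := fun x y => by unfold LTAdj; infer_instance

/-- The limping tripod gadget property: if `f` maps `p1, p2` to `p`, maps the
other vertices to `{r, g}`, and each of `p1, p2` has exactly two neighbours
mapped to `r` and two mapped to `g`, then `f u = f v`. -/
theorem stmt_11 (f : LTV → Tgt)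
    (hp1 : f p1 = Tgt.p) (hp2 : f p2 = Tgt.p)
    (hrg : ∀ x : LTV, x ≠ p1 → x ≠ p2 → f x = Tgt.r ∨ f x = Tgt.g)
    (h1r : (Finset.univ.filter (fun x => LTAdj p1 x ∧ f x = Tgt.r)).card = 2)
    (h1g : (Finset.univ.filter (fun x => LTAdj p1 x ∧ f x = Tgt.g)).card = 2)
    (h2r : (Finset.univ.filter (fun x => LTAdj p2 x ∧ f x = Tgt.r)).card = 2)
    (h2g : (Finset.univ.filter (fun x => LTAdj p2 x ∧ f x = Tgt.g)).card = 2) :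
    f u = f v := by
  have huniv : (Finset.univ : Finset LTV) = {p1,p2,u,v,m1,m2,m3} := by decide
  obtain hu | hu := hrg u (by decide) (by decide) <;>
  obtain hv | hv := hrg v (by decide) (by decide) <;>
  obtain h1 | h1 := hrg m1 (by decide) (by decide) <;>
  obtain h2 | h2 := hrg m2 (by decide) (by decide) <;>
  obtain h3 | h3 := hrg m3 (by decide) (by decide) <;>
  simp_all [huniv, Finset.filter_insert, Finset.filter_singleton, LTAdj]
end
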